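/- arXiv:1206.2185 — 2 statements merged into one kernel-verified Lean document; each statement's English description precedes it below -/
import Mathlib

section
/- Let N ≥ 1 and let ζ = (ζ₁,…,ζ_N), η = (η₁,…,η_N) ∈ ℝ^N. Then the limit as ε → 0⁺ of ε^{−N(N−1)/2} · det_{1 ≤ j,k ≤ N}[exp(ε ζ_j η_k)] equals h_N(ζ) · h_N(η) / ∏_{j=1}^N (j−1)!. (This small-parameter asymptotic of the exponential determinant underlies the limit x → 0 of the drifted noncolliding Brownian motion transition density and the combinatorial limit of Whittaker functions.) -/
open Filter Topology Finset

/-- Vandermonde product `h_N(v) = ∏_{j<ℓ}(v_ℓ − v_j)`. -/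
def vdm {N : ℕ} (v : Fin N → ℝ) : ℝ :=
  ∏ p ∈ Finset.univ.filter (fun p : Fin N × Fin N => p.1 < p.2), (v p.2 - v p.1)

lemma vdm_eq_det {N : ℕ} (v : Fin N → ℝ) : vdm v = Matrix.det (Matrix.vandermonde v) := by
  rw [Matrix.det_vandermonde, vdm, Finset.prod_filter, Fintype.prod_prod_type]
  refine Finset.prod_congr rfl fun i _ => ?_
  rw [← Finset.prod_filter]
  congr 1
  ext j
  simp [Finset.mem_Ioi]

lemma sum_range_card_le : ∀ (n : ℕ) (s : Finset ℕ), s.card = n →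
    (∑ i ∈ Finset.range n, i) ≤ ∑ i ∈ s, i ∧
    ((∑ i ∈ s, i) = ∑ i ∈ Finset.range n, i → s = Finset.range n) := by
  intro n
  induction n with
  | zero =>
    intro s hn
    rw [Finset.card_eq_zero] at hn
    subst hn; simp
  | succ n ih =>
    intro s hn
    have hne : s.Nonempty := Finset.card_pos.1 (hn ▸ n.succ_pos)
    set m := s.max' hne with hm
    have hmem : m ∈ s := s.max'_mem hne
    have hsub : s ⊆ Finset.range (m + 1) := fun x hx =>
      Finset.mem_range.2 (Nat.lt_succ_of_le (s.le_max' x hx))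
    have hcard : n + 1 ≤ m + 1 := by
      simpa [hn] using Finset.card_le_card hsub
    have hnm : n ≤ m := Nat.succ_le_succ_iff.1 hcard
    have hce : (s.erase m).card = n := by rw [Finset.card_erase_of_mem hmem, hn]; rfl
    obtain ⟨ih1, ih2⟩ := ih (s.erase m) hce
    have hsum : (∑ i ∈ s.erase m, i) + m = ∑ i ∈ s, i := Finset.sum_erase_add _ _ hmem
    have hrsum : (∑ i ∈ Finset.range (n+1), i) = (∑ i ∈ Finset.range n, i) + n :=
      Finset.sum_range_succ _ _
    constructor
    · rw [hrsum, ← hsum]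
      exact Nat.add_le_add ih1 hnm
    · intro heq
      rw [hrsum] at heq
      rw [← hsum] at heq
      have hm_eq : m = n := le_antisymm (by omega) hnm
      have he_eq : (∑ i ∈ s.erase m, i) = ∑ i ∈ Finset.range n, i := by omega
      have := ih2 he_eq
      rw [Finset.range_add_one, ← this, hm_eq, ← hm_eq, Finset.insert_erase hmem]

lemma inj_sum_ge {N : ℕ} (g : Fin N → ℕ) (hg : Function.Injective g) :
    (∑ i ∈ Finset.range N, i) ≤ ∑ j, g j ∧
      ((∑ j, g j) = ∑ i ∈ Finset.range N, i → ∃ τ : Equiv.Perm (Fin N), ∀ j, g j = (τ j : ℕ)) := by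
  have hcard : (Finset.univ.image g).card = N := by
    rw [Finset.card_image_of_injective _ hg, Finset.card_univ, Fintype.card_fin]
  have hsum : (∑ i ∈ Finset.univ.image g, i) = ∑ j, g j :=
    Finset.sum_image (fun x _ y _ h => hg h)
  obtain ⟨h1, h2⟩ := sum_range_card_le N (Finset.univ.image g) hcard
  constructor
  · rw [← hsum] at *; exact h1
  · intro heq
    have himg : Finset.univ.image g = Finset.range N := h2 (by rw [hsum]; exact heq)
    have hlt : ∀ j, g j < N := by
      intro j
      have : g j ∈ Finset.univ.image g := Finset.mem_image_of_mem g (Finset.mem_univ j)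
      rw [himg, Finset.mem_range] at this; exact this
    set t : Fin N → Fin N := fun j => ⟨g j, hlt j⟩ with ht
    have htinj : Function.Injective t := fun a b hab => hg (congrArg Fin.val hab)
    exact ⟨Equiv.ofBijective t (Finite.injective_iff_bijective.1 htinj), fun j => rfl⟩

-- step 1: expansion
lemma keyA (N : ℕ) (ζ η : Fin N → ℝ) (m : ℕ) :
    ∑ σ : Equiv.Perm (Fin N), ((Equiv.Perm.sign σ : ℤ) : ℝ) * (∑ j, ζ (σ j) * η j) ^ m
      = ∑ k ∈ Finset.piAntidiag Finset.univ m,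
          (Nat.multinomial Finset.univ k : ℝ) * (∏ j, η j ^ k j) *
            Matrix.det (Matrix.of fun i j : Fin N => ζ i ^ k j) := by
  have h1 : ∀ σ : Equiv.Perm (Fin N), (∑ j, ζ (σ j) * η j) ^ m
      = ∑ k ∈ Finset.piAntidiag Finset.univ m,
          (Nat.multinomial Finset.univ k : ℝ) * ∏ j, (ζ (σ j) * η j) ^ k j := fun σ =>
    Finset.sum_pow_eq_sum_piAntidiag Finset.univ _ m
  simp only [h1, Finset.mul_sum]
  rw [Finset.sum_comm]
  refine Finset.sum_congr rfl fun k _ => ?_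
  rw [Matrix.det_apply', Finset.mul_sum]
  refine Finset.sum_congr rfl fun σ _ => ?_
  simp only [mul_pow, Finset.prod_mul_distrib, Matrix.of_apply]
  ring

-- vanishing of non-injective terms
lemma det_zero_of_not_inj {N : ℕ} (ζ : Fin N → ℝ) (k : Fin N → ℕ) (hk : ¬ Function.Injective k) :
    Matrix.det (Matrix.of fun i j : Fin N => ζ i ^ k j) = 0 := by
  rw [Function.not_injective_iff] at hk
  obtain ⟨a, b, hab, hne⟩ := hk
  exact Matrix.det_zero_of_column_eq hne (fun i => by simp [hab])

lemma keyB (N : ℕ) (ζ η : Fin N → ℝ) (m : ℕ) (hm : m < ∑ i ∈ Finset.range N, i) :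
    ∑ σ : Equiv.Perm (Fin N), ((Equiv.Perm.sign σ : ℤ) : ℝ) * (∑ j, ζ (σ j) * η j) ^ m = 0 := by
  rw [keyA]
  refine Finset.sum_eq_zero fun k hk => ?_
  rw [Finset.mem_piAntidiag] at hk
  by_cases hinj : Function.Injective k
  · exact absurd ((inj_sum_ge k hinj).1.trans_eq hk.1) (lt_iff_not_ge.1 hm).elim
  · rw [det_zero_of_not_inj ζ k hinj, mul_zero]

lemma keyC (N : ℕ) (ζ η : Fin N → ℝ) :
    (∑ σ : Equiv.Perm (Fin N), ((Equiv.Perm.sign σ : ℤ) : ℝ) *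
        (∑ j, ζ (σ j) * η j) ^ (∑ i ∈ Finset.range N, i))
      = ((∑ i ∈ Finset.range N, i).factorial : ℝ) * vdm ζ * vdm η /
          ∏ i ∈ Finset.range N, (Nat.factorial i : ℝ) := by
  rw [keyA]
  set M := ∑ i ∈ Finset.range N, i with hM
  set S : Finset (Fin N → ℕ) :=
    Finset.image (fun τ : Equiv.Perm (Fin N) => fun j => (τ j : ℕ)) Finset.univ with hS
  have hsub : S ⊆ Finset.piAntidiag Finset.univ M := by
    intro k hk
    rw [hS, Finset.mem_image] at hk
    obtain ⟨τ, _, rfl⟩ := hk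
    rw [Finset.mem_piAntidiag]
    refine ⟨?_, fun i _ => Finset.mem_univ i⟩
    rw [Equiv.sum_comp τ (fun j => (j : ℕ)), hM, ← Fin.sum_univ_eq_sum_range]
  rw [← Finset.sum_subset hsub ?van]
  case van =>
    intro k hk hkS
    rw [Finset.mem_piAntidiag] at hk
    by_cases hinj : Function.Injective k
    · obtain ⟨τ, hτ⟩ := (inj_sum_ge k hinj).2 hk.1
      refine absurd ?_ hkS
      rw [hS, Finset.mem_image]
      exact ⟨τ, Finset.mem_univ τ, (funext hτ).symm⟩
    · rw [det_zero_of_not_inj ζ k hinj, mul_zero]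
  have hinj2 : Function.Injective (fun τ : Equiv.Perm (Fin N) => fun j => (τ j : ℕ)) := by
    intro a b hab
    exact Equiv.ext fun j => Fin.val_injective (congrFun hab j)
  rw [hS, Finset.sum_image (fun a _ b _ h => hinj2 h)]
  have hfac : ∀ τ : Equiv.Perm (Fin N),
      (∏ j : Fin N, Nat.factorial ((τ j : ℕ))) = ∏ i ∈ Finset.range N, Nat.factorial i := by
    intro τ
    rw [Equiv.prod_comp τ (fun j => Nat.factorial (j : ℕ)), Fin.prod_univ_eq_prod_range]
  have hpos : (0:ℝ) < ∏ i ∈ Finset.range N, (Nat.factorial i : ℝ) := by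
    apply Finset.prod_pos
    intro i _
    exact_mod_cast Nat.factorial_pos i
  have hmult : ∀ τ : Equiv.Perm (Fin N),
      (Nat.multinomial Finset.univ (fun j => (τ j : ℕ)) : ℝ)
        = (M.factorial : ℝ) / ∏ i ∈ Finset.range N, (Nat.factorial i : ℝ) := by
    intro τ
    have hspec := Nat.multinomial_spec Finset.univ (fun j => (τ j : ℕ))
    rw [hfac τ] at hspec
    have hsumτ : (∑ j : Fin N, (τ j : ℕ)) = M := by
      rw [Equiv.sum_comp τ (fun j => (j : ℕ)), hM, ← Fin.sum_univ_eq_sum_range]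
    rw [hsumτ] at hspec
    rw [eq_div_iff (ne_of_gt hpos)]
    rw [← Nat.cast_prod, ← Nat.cast_mul, mul_comm]
    exact_mod_cast congrArg (Nat.cast : ℕ → ℝ) hspec
  have hdet : ∀ τ : Equiv.Perm (Fin N),
      Matrix.det (Matrix.of fun i j : Fin N => ζ i ^ ((τ j : ℕ)))
        = ((Equiv.Perm.sign τ : ℤ) : ℝ) * Matrix.det (Matrix.vandermonde ζ) := by
    intro τ
    have : (Matrix.of fun i j : Fin N => ζ i ^ ((τ j : ℕ)))
        = (Matrix.vandermonde ζ).submatrix id τ := by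
      ext i j; simp [Matrix.vandermonde]
    rw [this, Matrix.det_permute']
  calc ∑ τ : Equiv.Perm (Fin N),
        (Nat.multinomial Finset.univ (fun j => (τ j : ℕ)) : ℝ) *
          (∏ j, η j ^ ((τ j : ℕ))) * Matrix.det (Matrix.of fun i j : Fin N => ζ i ^ ((τ j : ℕ)))
      = ((M.factorial : ℝ) / ∏ i ∈ Finset.range N, (Nat.factorial i : ℝ)) *
          Matrix.det (Matrix.vandermonde ζ) *
          ∑ τ : Equiv.Perm (Fin N), ((Equiv.Perm.sign τ : ℤ) : ℝ) * ∏ j, η j ^ ((τ j : ℕ)) := by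
        rw [Finset.mul_sum]
        refine Finset.sum_congr rfl fun τ _ => ?_
        rw [hmult τ, hdet τ]
        ring
    _ = ((M.factorial : ℝ) / ∏ i ∈ Finset.range N, (Nat.factorial i : ℝ)) *
          Matrix.det (Matrix.vandermonde ζ) * Matrix.det (Matrix.vandermonde η) := by
        congr 1
        rw [← Matrix.det_transpose (Matrix.vandermonde η), Matrix.det_apply']
        refine Finset.sum_congr rfl fun τ _ => ?_
        simp [Matrix.vandermonde]
    _ = (M.factorial : ℝ) * vdm ζ * vdm η / ∏ i ∈ Finset.range N, (Nat.factorial i : ℝ) := by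
        rw [vdm_eq_det, vdm_eq_det]
        ring

/-- Small-parameter asymptotics of the exponential determinant:
`ε^{−N(N−1)/2} det[e^{ε ζ_j η_k}] → h_N(ζ) h_N(η) / ∏_{j=1}^N (j−1)!` as `ε → 0⁺`. -/
theorem exp_det_small_parameter_limit (N : ℕ) (hN : 1 ≤ N) (ζ η : Fin N → ℝ) :
    Tendsto
      (fun ε : ℝ =>
        Matrix.det (Matrix.of fun j k : Fin N => Real.exp (ε * ζ j * η k)) /
          ε ^ (N * (N - 1) / 2))
      (𝓝[>] 0)
      (𝓝 (vdm ζ * vdm η / ∏ j ∈ Finset.range N, (Nat.factorial j : ℝ))) := by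
  set M : ℕ := N * (N - 1) / 2 with hMdef
  have hMsum : (∑ i ∈ Finset.range N, i) = M := Finset.sum_range_id N
  set L : ℝ := vdm ζ * vdm η / ∏ j ∈ Finset.range N, (Nat.factorial j : ℝ) with hL
  set c : Equiv.Perm (Fin N) → ℝ := fun σ => ∑ j, ζ (σ j) * η j with hc
  -- determinant as a finite sum of exponentials
  have hdet : ∀ ε : ℝ,
      Matrix.det (Matrix.of fun j k : Fin N => Real.exp (ε * ζ j * η k))
        = ∑ σ : Equiv.Perm (Fin N), ((Equiv.Perm.sign σ : ℤ) : ℝ) * Real.exp (ε * c σ) := by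
    intro ε
    rw [Matrix.det_apply']
    refine Finset.sum_congr rfl fun σ _ => ?_
    congr 1
    simp only [Matrix.of_apply]
    rw [← Real.exp_sum]
    congr 1
    rw [hc, Finset.mul_sum]
    exact Finset.sum_congr rfl fun j _ => by ring
  -- bound on c σ
  set B : ℝ := (∑ i, |ζ i|) * (∑ j, |η j|) with hB
  have hB0 : 0 ≤ B := mul_nonneg (Finset.sum_nonneg fun i _ => abs_nonneg _)
    (Finset.sum_nonneg fun j _ => abs_nonneg _)
  have hcB : ∀ σ : Equiv.Perm (Fin N), |c σ| ≤ B := by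
    intro σ
    refine (Finset.abs_sum_le_sum_abs _ _).trans ?_
    rw [hB, Finset.mul_sum]
    refine Finset.sum_le_sum fun j _ => ?_
    rw [abs_mul]
    refine mul_le_mul_of_nonneg_right ?_ (abs_nonneg _)
    exact Finset.single_le_sum (fun i _ => abs_nonneg (ζ i)) (Finset.mem_univ (σ j))
  -- Taylor polynomial sum identity
  have hT : ∀ ε : ℝ,
      (∑ σ : Equiv.Perm (Fin N), ((Equiv.Perm.sign σ : ℤ) : ℝ) *
        ∑ m ∈ Finset.range (M + 1), (ε * c σ) ^ m / (Nat.factorial m : ℝ))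
        = ε ^ M * L := by
    intro ε
    have swap : (∑ σ : Equiv.Perm (Fin N), ((Equiv.Perm.sign σ : ℤ) : ℝ) *
        ∑ m ∈ Finset.range (M + 1), (ε * c σ) ^ m / (Nat.factorial m : ℝ))
        = ∑ m ∈ Finset.range (M + 1), (ε ^ m / (Nat.factorial m : ℝ)) *
            ∑ σ : Equiv.Perm (Fin N), ((Equiv.Perm.sign σ : ℤ) : ℝ) * c σ ^ m := by
      simp only [Finset.mul_sum]
      rw [Finset.sum_comm]
      refine Finset.sum_congr rfl fun m _ => Finset.sum_congr rfl fun σ _ => ?_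
      rw [mul_pow]; ring
    rw [swap, Finset.sum_range_succ]
    have hzero : ∀ m ∈ Finset.range M, (ε ^ m / (Nat.factorial m : ℝ)) *
        ∑ σ : Equiv.Perm (Fin N), ((Equiv.Perm.sign σ :ℤ) : ℝ) * c σ ^ m = 0 := by
      intro m hm
      rw [keyB N ζ η m (hMsum ▸ Finset.mem_range.1 hm), mul_zero]
    rw [Finset.sum_eq_zero hzero, zero_add]
    have := keyC N ζ η
    rw [hMsum] at this
    rw [this]
    have hfacpos : (0:ℝ) < (Nat.factorial M : ℝ) := by exact_mod_cast Nat.factorial_pos M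
    field_simp [hL]
    rw [hL]; field_simp
  -- main estimate
  set K : ℝ := (Fintype.card (Equiv.Perm (Fin N)) : ℝ) * (B ^ (M + 1) *
      (((M + 2 : ℕ) : ℝ) / ((Nat.factorial (M + 1) : ℝ) * ((M + 1 : ℕ) : ℝ)))) with hK
  set δ : ℝ := min 1 (1 / (B + 1)) with hδ
  have hδpos : 0 < δ := lt_min one_pos (by positivity)
  have hstep : ∀ ε ∈ Set.Ioo (0:ℝ) δ,
      |Matrix.det (Matrix.of fun j k : Fin N => Real.exp (ε * ζ j * η k)) / ε ^ M - L|
        ≤ K * ε := by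
    intro ε hε
    obtain ⟨hε0, hεδ⟩ := hε
    have hεB : ε * B ≤ 1 := by
      have h2 : ε * B ≤ (1 / (B + 1)) * B :=
        mul_le_mul_of_nonneg_right ((hεδ.trans_le (min_le_right _ _)).le) hB0
      have h3 : (1 / (B + 1)) * B ≤ 1 := by
        rw [div_mul_eq_mul_div, one_mul, div_le_one (by positivity)]; linarith
      linarith
    have hεcB : ∀ σ : Equiv.Perm (Fin N), |ε * c σ| ≤ ε * B := by
      intro σ
      rw [abs_mul, abs_of_pos hε0]
      exact mul_le_mul_of_nonneg_left (hcB σ) hε0.le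
    have hεc1 : ∀ σ : Equiv.Perm (Fin N), |ε * c σ| ≤ 1 := fun σ => (hεcB σ).trans hεB
    have hb : |Matrix.det (Matrix.of fun j k : Fin N => Real.exp (ε * ζ j * η k))
        - ε ^ M * L| ≤ K * ε ^ (M + 1) := by
      rw [hdet, ← hT ε, ← Finset.sum_sub_distrib]
      refine (Finset.abs_sum_le_sum_abs _ _).trans ?_
      have hterm : ∀ σ : Equiv.Perm (Fin N),
          |((Equiv.Perm.sign σ : ℤ) : ℝ) * Real.exp (ε * c σ)
            - ((Equiv.Perm.sign σ : ℤ) : ℝ) *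
              ∑ m ∈ Finset.range (M + 1), (ε * c σ) ^ m / (Nat.factorial m : ℝ)|
          ≤ B ^ (M + 1) * (((M + 2 : ℕ) : ℝ) /
              ((Nat.factorial (M + 1) : ℝ) * ((M + 1 : ℕ) : ℝ))) * ε ^ (M + 1) := by
        intro σ
        rw [← mul_sub, abs_mul]
        have hsign : |((Equiv.Perm.sign σ : ℤ) : ℝ)| = 1 := by
          rcases Int.units_eq_one_or (Equiv.Perm.sign σ) with h | h <;> simp [h]
        rw [hsign, one_mul]
        have hexp := Real.exp_bound (hεc1 σ) (Nat.succ_pos M)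
        refine hexp.trans ?_
        have hpow : |ε * c σ| ^ (M + 1) ≤ (ε * B) ^ (M + 1) :=
          pow_le_pow_left₀ (abs_nonneg _) (hεcB σ) _
        have hconst : (0:ℝ) ≤ ((M + 2 : ℕ) : ℝ) /
            ((Nat.factorial (M + 1) : ℝ) * ((M + 1 : ℕ) : ℝ)) := by positivity
        calc |ε * c σ| ^ (M + 1) * (((M + 1).succ : ℝ) /
                ((Nat.factorial (M + 1) : ℝ) * ((M + 1 : ℕ) : ℝ)))
            ≤ (ε * B) ^ (M + 1) * (((M + 2 : ℕ) : ℝ) /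
                ((Nat.factorial (M + 1) : ℝ) * ((M + 1 : ℕ) : ℝ))) := by
              have hsucc : (((M + 1).succ : ℕ) : ℝ) = ((M + 2 : ℕ) : ℝ) := by norm_cast
              rw [hsucc]
              exact mul_le_mul_of_nonneg_right hpow hconst
          _ = B ^ (M + 1) * (((M + 2 : ℕ) : ℝ) /
                ((Nat.factorial (M + 1) : ℝ) * ((M + 1 : ℕ) : ℝ))) * ε ^ (M + 1) := by
              rw [mul_pow]; ring
      refine (Finset.sum_le_sum fun σ _ => hterm σ).trans ?_
      rw [Finset.sum_const, Finset.card_univ, nsmul_eq_mul, hK]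
      ring_nf
      exact le_refl _
    have hεM : (0:ℝ) < ε ^ M := pow_pos hε0 M
    rw [div_sub' (ne_of_gt hεM), abs_div, abs_of_pos hεM, div_le_iff₀ hεM]
    calc |Matrix.det (Matrix.of fun j k : Fin N => Real.exp (ε * ζ j * η k)) - ε ^ M * L|
        ≤ K * ε ^ (M + 1) := by
          rw [mul_comm (ε ^ M) L] at hb ⊢
          exact hb
      _ = K * ε * ε ^ M := by rw [pow_succ]; ring
  rw [tendsto_iff_dist_tendsto_zero]
  have hKtendsto : Tendsto (fun ε : ℝ => K * ε) (𝓝[>] (0:ℝ)) (𝓝 0) := by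
    have : Tendsto (fun ε : ℝ => K * ε) (𝓝 (0:ℝ)) (𝓝 (K * 0)) :=
      (continuous_const.mul continuous_id).tendsto 0
    rw [mul_zero] at this
    exact this.mono_left nhdsWithin_le_nhds
  refine squeeze_zero' ?_ ?_ hKtendsto
  · exact Filter.Eventually.of_forall fun ε => dist_nonneg
  · have hmem : Set.Ioo (0:ℝ) δ ∈ 𝓝[>] (0:ℝ) :=
      Ioo_mem_nhdsGT_of_mem ⟨le_refl 0, hδpos⟩
    filter_upwards [hmem] with ε hε
    rw [Real.dist_eq]
    exact hstep ε hε
end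

section
/- Let t > 0, N ≥ 1, let x = (x₁,…,x_N) ∈ ℝ^N, let ν = (ν₁,…,ν_N) ∈ ℝ^N have distinct entries, and let ξ = (ξ₁,…,ξ_N) ∈ ℝ^N with ξ₁ < ⋯ < ξ_N. Then the limit as ε → 0⁺ of exp(−t|ν|²/2) · (det_{1 ≤ j,k ≤ N}[e^{ν_j x_k}] / det_{1 ≤ j,k ≤ N}[e^{ν_j ε ξ_k}]) · det_{1 ≤ j,k ≤ N}[p(t, x_j | ε ξ_k)] equals t^{−N} · (h_N(x/t)/h_N(ν)) · det_{1 ≤ j,k ≤ N}[p(1/t, x_j/t | ν_k)]. (This is the reciprocal-time relation: the transition density of the noncolliding Brownian motion with drift ν started from N particles at the origin, evaluated at x at time t, equals the reciprocal-time transform of the driftless noncolliding Brownian motion density started from ν.) -/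
open Filter Topology Finset

/-- Heat kernel: transition density of one-dimensional standard Brownian motion. -/
noncomputable def heatKernel (t y x : ℝ) : ℝ :=
  Real.exp (-(x - y) ^ 2 / (2 * t)) / Real.sqrt (2 * Real.pi * t)

namespace RTR
open Equiv Matrix

noncomputable def Vd {N : ℕ} (a : Fin N → ℝ) : ℝ := (Matrix.vandermonde a).det

def mm (N : ℕ) : ℕ := ∑ j : Fin N, (j : ℕ)

noncomputable def D {N : ℕ} (ξ a : Fin N → ℝ) (n : ℕ) : ℝ :=
  ∑ σ : Equiv.Perm (Fin N), ((Equiv.Perm.sign σ : ℤ) : ℝ) * (∑ k, a (σ k) * ξ k) ^ n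

lemma pigeon {N : ℕ} {μ : Fin N → ℕ} (hμ : Function.Injective μ) :
    mm N ≤ ∑ k, μ k ∧ ((∑ k, μ k = mm N) → ∃ τ : Equiv.Perm (Fin N), ∀ k, μ k = τ k) := by
  classical
  set s : Finset ℕ := Finset.univ.image μ with hs
  have hcard : s.card = N := by
    rw [hs, Finset.card_image_of_injective _ hμ, Finset.card_univ, Fintype.card_fin]
  set e := s.orderIsoOfFin hcard with he
  set g : Fin N → ℕ := fun i => (e i : ℕ) with hg
  have hgmono : StrictMono g := fun i j hij => by
    exact_mod_cast e.strictMono hij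
  have hile : ∀ i : Fin N, (i : ℕ) ≤ g i := by
    intro i
    induction' hi : (i : ℕ) with n ih generalizing i
    · exact Nat.zero_le _
    · have hn : n < N := by omega
      have h1 : (⟨n, hn⟩ : Fin N) < i := by
        simp [Fin.lt_def, hi]
      have := hgmono h1
      have := ih ⟨n, hn⟩ rfl
      omega
  have hsum : ∑ k, μ k = ∑ i, g i := by
    have h1 : ∑ v ∈ s, v = ∑ k, μ k := by
      rw [hs, Finset.sum_image]
      intro a _ b _ h; exact hμ h
    have h2 : ∑ i, g i = ∑ v ∈ s, v := by
      rw [← Finset.sum_coe_sort s (fun v => (v : ℕ))]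
      exact Fintype.sum_equiv e.toEquiv _ _ (fun i => rfl)
    omega
  constructor
  · rw [hsum, mm]
    exact Finset.sum_le_sum (fun i _ => hile i)
  · intro heq
    have hgi : ∀ i : Fin N, g i = (i : ℕ) := by
      have h := Finset.sum_eq_sum_iff_of_le (fun i (_ : i ∈ Finset.univ) => hile i)
      rw [mm] at heq
      intro i
      exact (h.mp (by omega) i (Finset.mem_univ i)).symm
    have hlt : ∀ k, μ k < N := by
      intro k
      have hmem : μ k ∈ s := by simp [hs]
      obtain ⟨i, hi⟩ := e.surjective ⟨μ k, hmem⟩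
      have : μ k = g i := by simp [hg, hi]
      rw [this, hgi i]; exact i.isLt
    set τ0 : Fin N → Fin N := fun k => ⟨μ k, hlt k⟩ with hτ0
    have hτ0inj : Function.Injective τ0 := by
      intro a b h
      apply hμ
      simpa [hτ0, Fin.ext_iff] using h
    refine ⟨Equiv.ofBijective τ0 (Finite.injective_iff_bijective.mp hτ0inj), fun k => rfl⟩

end RTR

namespace RTR
open Equiv Matrix

def mu {N n : ℕ} (f : Fin n → Fin N) (k : Fin N) : ℕ :=
  (Finset.univ.filter fun i => f i = k).card

lemma sum_mu {N n : ℕ} (f : Fin n → Fin N) : ∑ k, mu f k = n := by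
  classical
  have := Finset.card_eq_sum_card_fiberwise
    (f := f) (s := Finset.univ) (t := Finset.univ) (fun x _ => Finset.mem_univ _)
  simpa [mu, Finset.card_univ] using this.symm

lemma prod_mu {N n : ℕ} (f : Fin n → Fin N) (g : Fin N → ℝ) :
    ∏ i, g (f i) = ∏ k, g k ^ mu f k := by
  classical
  rw [← Finset.prod_fiberwise_of_maps_to (g := f) (f := fun i => g (f i))
    (fun i (_ : i ∈ Finset.univ) => Finset.mem_univ (f i))]
  refine Finset.prod_congr rfl (fun k _ => ?_)
  rw [Finset.prod_congr rfl (fun i hi => by rw [(Finset.mem_filter.mp hi).2] : ∀ i ∈ Finset.univ.filter (fun i => f i = k), g (f i) = g k), Finset.prod_const, mu]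

lemma det_comp_zero {N : ℕ} {μ : Fin N → ℕ} (h : ¬ Function.Injective μ)
    (F : Fin N → ℕ → ℝ) : (Matrix.of fun j k : Fin N => F j (μ k)).det = 0 := by
  rw [Function.not_injective_iff] at h
  obtain ⟨k₁, k₂, hval, hne⟩ := h
  exact Matrix.det_zero_of_column_eq hne (fun j => by simp [hval])

lemma det_pow_perm {N : ℕ} {μ : Fin N → ℕ} (τ : Equiv.Perm (Fin N))
    (hμ : ∀ k, μ k = τ k) (a : Fin N → ℝ) :
    (Matrix.of fun j k : Fin N => a j ^ μ k).det = ((Equiv.Perm.sign τ : ℤ) : ℝ) * Vd a := by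
  have : (Matrix.of fun j k : Fin N => a j ^ μ k) =
      (Matrix.vandermonde a).submatrix id τ := by
    ext j k
    simp [Matrix.vandermonde, hμ k]
  rw [this, Matrix.det_permute', Vd]

lemma det_ind_perm {N : ℕ} {μ : Fin N → ℕ} (τ : Equiv.Perm (Fin N))
    (hμ : ∀ k, μ k = τ k) :
    (Matrix.of fun j k : Fin N => if (j : ℕ) = μ k then (1:ℝ) else 0).det
      = ((Equiv.Perm.sign τ : ℤ) : ℝ) := by
  have : (Matrix.of fun j k : Fin N => if (j : ℕ) = μ k then (1:ℝ) else 0)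
      = (τ.permMatrix ℝ)ᵀ := by
    ext j k
    have : ((j : ℕ) = μ k) ↔ (τ k = j) := by
      rw [hμ k]
      constructor
      · intro h; exact Fin.ext h.symm
      · intro h; rw [h]
    simp [Matrix.transpose_apply, Equiv.Perm.permMatrix, PEquiv.toMatrix,
      Equiv.toPEquiv, this]
  rw [this, Matrix.det_transpose, Matrix.det_permutation]

lemma det_pow_eq {N : ℕ} {μ : Fin N → ℕ} (hsum : ∑ k, μ k = mm N) (a : Fin N → ℝ) :
    (Matrix.of fun j k : Fin N => a j ^ μ k).det
      = (Matrix.of fun j k : Fin N => if (j : ℕ) = μ k then (1:ℝ) else 0).det * Vd a := by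
  classical
  by_cases hinj : Function.Injective μ
  · obtain ⟨τ, hτ⟩ := (pigeon hinj).2 hsum
    rw [det_pow_perm τ hτ, det_ind_perm τ hτ]
  · rw [det_comp_zero hinj (fun j x => a j ^ x),
      det_comp_zero hinj (fun j x => if (j : ℕ) = x then (1:ℝ) else 0), zero_mul]

lemma D_expand {N : ℕ} (ξ a : Fin N → ℝ) (n : ℕ) :
    D ξ a n = ∑ f : Fin n → Fin N,
      (∏ i, ξ (f i)) * (Matrix.of fun j k : Fin N => a j ^ mu f k).det := by
  classical
  rw [D]
  have h1 : ∀ σ : Equiv.Perm (Fin N), (∑ k, a (σ k) * ξ k) ^ n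
      = ∑ f : Fin n → Fin N, (∏ i, ξ (f i)) * ∏ k, a (σ k) ^ mu f k := by
    intro σ
    rw [Fintype.sum_pow (fun k => a (σ k) * ξ k) n]
    refine Finset.sum_congr rfl (fun f _ => ?_)
    rw [Finset.prod_mul_distrib, mul_comm, ← prod_mu f (fun k => a (σ k))]
  simp_rw [h1, Finset.mul_sum]
  rw [Finset.sum_comm]
  refine Finset.sum_congr rfl (fun f _ => ?_)
  rw [Matrix.det_apply', Finset.mul_sum, Finset.sum_congr rfl]
  intro σ _
  simp only [Matrix.of_apply, Units.smul_def, zsmul_eq_mul]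
  ring

lemma D_lt {N : ℕ} (ξ a : Fin N → ℝ) {n : ℕ} (hn : n < mm N) : D ξ a n = 0 := by
  classical
  rw [D_expand]
  refine Finset.sum_eq_zero (fun f _ => ?_)
  have hninj : ¬ Function.Injective (mu f) := by
    intro hinj
    have := (pigeon hinj).1
    rw [sum_mu] at this
    omega
  rw [det_comp_zero hninj (fun j x => a j ^ x), mul_zero]

noncomputable def K {N : ℕ} (ξ : Fin N → ℝ) : ℝ :=
  ∑ f : Fin (mm N) → Fin N,
    (∏ i, ξ (f i)) * (Matrix.of fun j k : Fin N => if (j : ℕ) = mu f k then (1:ℝ) else 0).det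

lemma D_mm {N : ℕ} (ξ a : Fin N → ℝ) : D ξ a (mm N) = K ξ * Vd a := by
  classical
  rw [D_expand, K, Finset.sum_mul]
  refine Finset.sum_congr rfl (fun f _ => ?_)
  rw [det_pow_eq (sum_mu f) a, mul_assoc]

end RTR

namespace RTR
open Equiv Matrix Real

lemma D_symm {N : ℕ} (ξ a : Fin N → ℝ) (n : ℕ) : D ξ a n = D a ξ n := by
  rw [D, D]
  refine Fintype.sum_equiv (Equiv.inv (Equiv.Perm (Fin N))) _ _ (fun σ => ?_)
  simp only [Equiv.inv_apply, Equiv.Perm.sign_inv]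
  congr 1
  rw [← Equiv.sum_comp σ (fun x => ξ (σ⁻¹ x) * a x)]
  simp only [Equiv.Perm.inv_def, Equiv.symm_apply_apply]
  exact congrArg (· ^ n) (Finset.sum_congr rfl fun k _ => mul_comm _ _)

lemma exp_rem_tendsto (c : ℝ) (m : ℕ) :
    Tendsto (fun ε : ℝ =>
        (Real.exp (ε * c) - ∑ i ∈ Finset.range m, (ε * c) ^ i / i.factorial) / ε ^ m)
      (𝓝[>] 0) (𝓝 (c ^ m / m.factorial)) := by
  set B : ℝ := ((m + 1 : ℕ).succ : ℝ) / (((m + 1 : ℕ).factorial : ℝ) * (m + 1 : ℕ)) with hB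
  set err : ℝ → ℝ := fun ε =>
    (Real.exp (ε * c) - ∑ i ∈ Finset.range (m + 1), (ε * c) ^ i / i.factorial) / ε ^ m with herr
  have herrto : Tendsto err (𝓝[>] 0) (𝓝 0) := by
    apply squeeze_zero_norm' (a := fun ε => ε * (|c| ^ (m + 1) * B))
    · have hδ : Set.Ioo (0:ℝ) (1 / (|c| + 1)) ∈ 𝓝[>] (0:ℝ) := by
        apply Ioo_mem_nhdsGT_of_mem
        constructor
        · exact le_refl _
        · positivity
      filter_upwards [hδ] with ε hε
      have hε0 : 0 < ε := hε.1
      have hc1 : |ε * c| ≤ 1 := by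
        rw [abs_mul, abs_of_pos hε0]
        have h2 : ε * (|c| + 1) ≤ 1 := by
          rw [← le_div_iff₀ (by positivity)]
          exact hε.2.le
        nlinarith [abs_nonneg c]
      have hb := Real.exp_bound hc1 (Nat.succ_pos m)
      have hεm : (0:ℝ) < ε ^ m := by positivity
      rw [herr]
      simp only [norm_div, Real.norm_eq_abs, abs_pow, abs_of_pos hε0]
      rw [div_le_iff₀ hεm]
      have hb' : |Real.exp (ε * c) - ∑ i ∈ Finset.range (m + 1), (ε * c) ^ i / i.factorial|
          ≤ |ε * c| ^ (m + 1) * B := by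
        rw [hB]
        push_cast at hb ⊢
        convert hb using 2
      calc |Real.exp (ε * c) - ∑ i ∈ Finset.range (m + 1), (ε * c) ^ i / i.factorial|
          ≤ |ε * c| ^ (m + 1) * B := hb'
        _ = ε * (|c| ^ (m + 1) * B) * ε ^ m := by
            rw [abs_mul, mul_pow, abs_of_pos hε0, pow_succ]
            ring
    · have : Tendsto (fun ε : ℝ => ε * (|c| ^ (m + 1) * B)) (𝓝 0) (𝓝 0) := by
        simpa using (continuous_id.tendsto (0:ℝ)).mul_const (|c| ^ (m + 1) * B)
      exact this.mono_left nhdsWithin_le_nhds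
  have hmain : ∀ ε ∈ Set.Ioi (0:ℝ),
      c ^ m / m.factorial + err ε =
        (Real.exp (ε * c) - ∑ i ∈ Finset.range m, (ε * c) ^ i / i.factorial) / ε ^ m := by
    intro ε hε
    have hε0 : (0:ℝ) < ε := hε
    have hεm : (ε:ℝ) ^ m ≠ 0 := by positivity
    simp only [herr]
    rw [Finset.sum_range_succ]
    field_simp
    ring
  have := (tendsto_const_nhds (x := c ^ m / (m.factorial : ℝ))
      (f := 𝓝[>] (0:ℝ))).add herrto
  rw [add_zero] at this
  refine this.congr' ?_
  filter_upwards [self_mem_nhdsWithin] with ε hε using hmain ε hε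

lemma det_exp_eq {N : ℕ} (ξ a : Fin N → ℝ) (ε : ℝ) :
    (Matrix.of fun j k : Fin N => Real.exp (a j * (ε * ξ k))).det
      = ∑ σ : Equiv.Perm (Fin N),
          ((Equiv.Perm.sign σ : ℤ) : ℝ) * Real.exp (ε * ∑ k, a (σ k) * ξ k) := by
  rw [Matrix.det_apply']
  refine Finset.sum_congr rfl (fun σ _ => ?_)
  simp only [Matrix.of_apply, Units.smul_def, zsmul_eq_mul]
  rw [← Real.exp_sum]
  congr 2
  rw [Finset.mul_sum]
  exact Finset.sum_congr rfl (fun k _ => by ring)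

lemma det_exp_tendsto {N : ℕ} (ξ a : Fin N → ℝ) :
    Tendsto (fun ε : ℝ =>
        (Matrix.of fun j k : Fin N => Real.exp (a j * (ε * ξ k))).det / ε ^ mm N)
      (𝓝[>] 0) (𝓝 (D ξ a (mm N) / ((mm N).factorial : ℝ))) := by
  classical
  set m := mm N with hm
  set c : Equiv.Perm (Fin N) → ℝ := fun σ => ∑ k, a (σ k) * ξ k with hc
  set es : Equiv.Perm (Fin N) → ℝ := fun σ => ((Equiv.Perm.sign σ : ℤ) : ℝ) with hes
  have key : ∀ ε : ℝ,
      (Matrix.of fun j k : Fin N => Real.exp (a j * (ε * ξ k))).det / ε ^ m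
        = ∑ σ : Equiv.Perm (Fin N), es σ *
            ((Real.exp (ε * c σ) - ∑ i ∈ Finset.range m, (ε * c σ) ^ i / i.factorial) / ε ^ m) := by
    intro ε
    have hz : ∑ σ : Equiv.Perm (Fin N), es σ * ∑ i ∈ Finset.range m, (ε * c σ) ^ i / i.factorial
        = 0 := by
      simp_rw [Finset.mul_sum]
      rw [Finset.sum_comm]
      refine Finset.sum_eq_zero (fun i hi => ?_)
      have hD := D_lt ξ a (Finset.mem_range.mp hi)
      show ∑ σ : Equiv.Perm (Fin N), es σ * ((ε * c σ) ^ i / i.factorial) = 0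
      have : ∑ σ : Equiv.Perm (Fin N), es σ * ((ε * c σ) ^ i / i.factorial)
          = (ε ^ i / i.factorial) * D ξ a i := by
        rw [D, Finset.mul_sum]
        refine Finset.sum_congr rfl (fun σ _ => ?_)
        rw [mul_pow]
        ring
      rw [this, hD, mul_zero]
    rw [det_exp_eq ξ a ε]
    have : ∑ σ : Equiv.Perm (Fin N), es σ * Real.exp (ε * c σ)
        = ∑ σ : Equiv.Perm (Fin N), es σ *
            (Real.exp (ε * c σ) - ∑ i ∈ Finset.range m, (ε * c σ) ^ i / i.factorial) := by
      rw [eq_comm]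
      simp_rw [mul_sub]
      rw [Finset.sum_sub_distrib, hz, sub_zero]
    rw [this, Finset.sum_div]
    exact Finset.sum_congr rfl (fun σ _ => by rw [mul_div_assoc])
  rw [funext key]
  have hlim : Tendsto (fun ε : ℝ => ∑ σ : Equiv.Perm (Fin N), es σ *
      ((Real.exp (ε * c σ) - ∑ i ∈ Finset.range m, (ε * c σ) ^ i / i.factorial) / ε ^ m))
      (𝓝[>] 0) (𝓝 (∑ σ : Equiv.Perm (Fin N), es σ * (c σ ^ m / m.factorial))) := by
    exact tendsto_finset_sum _ (fun σ _ => (exp_rem_tendsto (c σ) m).const_mul (es σ))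
  convert hlim using 2
  rw [D, Finset.sum_div]
  exact Finset.sum_congr rfl (fun σ _ => by rw [mul_div_assoc])

end RTR

namespace RTR
open Equiv Matrix Real

def pairs (N : ℕ) : Finset (Fin N × Fin N) :=
  Finset.univ.filter (fun p : Fin N × Fin N => p.1 < p.2)

lemma prod_pairs {N : ℕ} {M : Type*} [CommMonoid M] (F : Fin N → Fin N → M) :
    ∏ p ∈ pairs N, F p.1 p.2 = ∏ i : Fin N, ∏ j ∈ Finset.Ioi i, F i j := by
  rw [Finset.prod_sigma']
  refine Finset.prod_bij' (fun p _ => (⟨p.1, p.2⟩ : (_ : Fin N) × Fin N)) (fun s _ => (s.1, s.2))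
    ?_ ?_ ?_ ?_ ?_
  · intro p hp
    simp only [pairs, Finset.mem_filter, Finset.mem_univ, true_and] at hp
    simp [Finset.mem_Ioi, hp]
  · intro s hs
    simp only [Finset.mem_sigma, Finset.mem_univ, Finset.mem_Ioi, true_and] at hs
    simp [pairs, hs]
  · intro p _; rfl
  · intro s _; rfl
  · intro p _; rfl

lemma card_pairs (N : ℕ) : (pairs N).card = mm N := by
  classical
  have h : (pairs N).card = ∑ j : Fin N, (Finset.Iio j).card := by
    rw [← Finset.card_sigma]
    refine Finset.card_bij' (fun p _ => ⟨p.2, p.1⟩) (fun s _ => (s.2, s.1)) ?_ ?_ ?_ ?_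
    · intro p hp
      simp only [pairs, Finset.mem_filter, Finset.mem_univ, true_and] at hp
      simp [Finset.mem_Iio, hp]
    · intro s hs
      simp only [Finset.mem_sigma, Finset.mem_univ, Finset.mem_Iio, true_and] at hs
      simp [pairs, hs]
    · intro p _; rfl
    · intro s _; rfl
  rw [h, mm]
  exact Finset.sum_congr rfl (fun j _ => Fin.card_Iio j)

lemma vdm_eq {N : ℕ} (v : Fin N → ℝ) : vdm v = Vd v := by
  rw [Vd, Matrix.det_vandermonde, vdm]
  exact prod_pairs (fun i j => v j - v i)

lemma Vd_pos {N : ℕ} {v : Fin N → ℝ} (hv : ∀ j k : Fin N, j < k → v j < v k) : 0 < Vd v := by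
  rw [Vd, Matrix.det_vandermonde]
  refine Finset.prod_pos (fun i _ => Finset.prod_pos (fun j hj => ?_))
  have : i < j := Finset.mem_Ioi.mp hj
  linarith [hv i j this]

noncomputable def iota (N : ℕ) : Fin N → ℝ := fun k => ((k : ℕ) : ℝ)

lemma Vd_iota_pos (N : ℕ) : 0 < Vd (iota N) :=
  Vd_pos (fun j k hjk => by
    simp only [iota]
    exact_mod_cast (Fin.lt_def.mp hjk))

lemma slope_exp (c d : ℝ) :
    Tendsto (fun ε : ℝ => (Real.exp (ε * c) - Real.exp (ε * d)) / ε) (𝓝[>] 0) (𝓝 (c - d)) := by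
  have h1 : HasDerivAt (fun ε : ℝ => Real.exp (ε * c) - Real.exp (ε * d)) (c - d) 0 := by
    have hc : HasDerivAt (fun ε : ℝ => Real.exp (ε * c)) c 0 := by
      have := (Real.hasDerivAt_exp (0 * c)).comp 0 ((hasDerivAt_id (0:ℝ)).mul_const c)
      simpa [Function.comp_def] using this
    have hd : HasDerivAt (fun ε : ℝ => Real.exp (ε * d)) d 0 := by
      have := (Real.hasDerivAt_exp (0 * d)).comp 0 ((hasDerivAt_id (0:ℝ)).mul_const d)
      simpa [Function.comp_def] using this
    exact hc.sub hd
  have h2 := hasDerivAt_iff_tendsto_slope.mp h1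
  have h3 : (fun ε : ℝ => (Real.exp (ε * c) - Real.exp (ε * d)) / ε)
      = slope (fun ε : ℝ => Real.exp (ε * c) - Real.exp (ε * d)) 0 := by
    funext ε
    rw [slope_def_field]
    simp [div_eq_div_iff]
  rw [h3]
  exact h2.mono_left (nhdsWithin_mono 0 (fun y hy => Set.mem_compl_singleton_iff.mpr (ne_of_gt hy)))

end RTR

namespace RTR
open Equiv Matrix Real

lemma det_exp_iota_tendsto (N : ℕ) :
    Tendsto (fun ε : ℝ =>
        (Matrix.of fun j k : Fin N => Real.exp (iota N j * (ε * iota N k))).det / ε ^ mm N)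
      (𝓝[>] 0) (𝓝 (Vd (iota N))) := by
  have hdet : ∀ ε : ℝ, (Matrix.of fun j k : Fin N => Real.exp (iota N j * (ε * iota N k))).det
      = ∏ p ∈ pairs N, (Real.exp (ε * iota N p.2) - Real.exp (ε * iota N p.1)) := by
    intro ε
    have h : (Matrix.of fun j k : Fin N => Real.exp (iota N j * (ε * iota N k)))
        = Matrix.vandermonde (fun j => Real.exp (ε * iota N j)) := by
      ext j k
      simp only [Matrix.of_apply, Matrix.vandermonde]
      rw [← Real.exp_nat_mul]
      congr 1
      simp only [iota]
      ring
    rw [h, Matrix.det_vandermonde, ← prod_pairs]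
  have heq : ∀ ε : ℝ,
      (Matrix.of fun j k : Fin N => Real.exp (iota N j * (ε * iota N k))).det / ε ^ mm N
        = ∏ p ∈ pairs N, ((Real.exp (ε * iota N p.2) - Real.exp (ε * iota N p.1)) / ε) := by
    intro ε
    rw [hdet ε, show (ε:ℝ) ^ mm N = ∏ _p ∈ pairs N, ε by rw [Finset.prod_const, card_pairs]]
    exact (Finset.prod_div_distrib _ _).symm
  rw [funext heq]
  have hval : Vd (iota N) = ∏ p ∈ pairs N, (iota N p.2 - iota N p.1) := by
    rw [← vdm_eq]
    rfl
  rw [hval]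
  exact tendsto_finset_prod _ (fun p _ => slope_exp (iota N p.2) (iota N p.1))

lemma D_iota (N : ℕ) :
    D (iota N) (iota N) (mm N) = ((mm N).factorial : ℝ) * Vd (iota N) := by
  have h := tendsto_nhds_unique (det_exp_tendsto (iota N) (iota N)) (det_exp_iota_tendsto N)
  have hm : ((mm N).factorial : ℝ) ≠ 0 := Nat.cast_ne_zero.mpr (Nat.factorial_ne_zero _)
  rw [div_eq_iff hm] at h
  rw [h, mul_comm]

lemma D_mm_eq {N : ℕ} (ξ a : Fin N → ℝ) :
    D ξ a (mm N) = (((mm N).factorial : ℝ) * (Vd ξ / Vd (iota N))) * Vd a := by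
  have hι : Vd (iota N) ≠ 0 := (Vd_iota_pos N).ne'
  have hKι : K (iota N) = ((mm N).factorial : ℝ) := by
    have h := (D_mm (iota N) (iota N)).symm.trans (D_iota N)
    exact mul_right_cancel₀ hι h
  have h2 : K ξ * Vd (iota N) = ((mm N).factorial : ℝ) * Vd ξ := by
    have h := (D_mm ξ (iota N)).symm.trans ((D_symm ξ (iota N) (mm N)).trans (D_mm (iota N) ξ))
    rw [hKι] at h
    exact h
  have hK : K ξ = ((mm N).factorial : ℝ) * (Vd ξ / Vd (iota N)) := by
    rw [eq_comm, mul_div_assoc', div_eq_iff hι, ← h2]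
  rw [D_mm, hK]

lemma ratio_tendsto {N : ℕ} (a ν ξ : Fin N → ℝ) (hν : Function.Injective ν)
    (hξ : ∀ j k : Fin N, j < k → ξ j < ξ k) :
    Tendsto (fun ε : ℝ =>
        (Matrix.of fun j k : Fin N => Real.exp (a j * (ε * ξ k))).det /
          (Matrix.of fun j k : Fin N => Real.exp (ν j * (ε * ξ k))).det)
      (𝓝[>] 0) (𝓝 (Vd a / Vd ν)) := by
  have hVν : Vd ν ≠ 0 := Matrix.det_vandermonde_ne_zero_iff.mpr hν
  have hVξ : (0:ℝ) < Vd ξ := Vd_pos hξ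
  have hι : (0:ℝ) < Vd (iota N) := Vd_iota_pos N
  have hm : ((mm N).factorial : ℝ) ≠ 0 := Nat.cast_ne_zero.mpr (Nat.factorial_ne_zero _)
  set C : ℝ := ((mm N).factorial : ℝ) * (Vd ξ / Vd (iota N)) with hC
  have hCne : C ≠ 0 := by
    rw [hC]
    exact mul_ne_zero hm (div_ne_zero hVξ.ne' hι.ne')
  have h1 := det_exp_tendsto ξ a
  have h2 := det_exp_tendsto ξ ν
  rw [D_mm_eq, ← hC] at h1 h2
  have hden : C * Vd ν / ((mm N).factorial : ℝ) ≠ 0 :=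
    div_ne_zero (mul_ne_zero hCne hVν) hm
  have h3 := h1.div h2 hden
  have hval : C * Vd a / ((mm N).factorial : ℝ) / (C * Vd ν / ((mm N).factorial : ℝ))
      = Vd a / Vd ν := by
    rw [div_div_div_comm, div_self hm, div_one, mul_div_mul_left _ _ hCne]
  rw [hval] at h3
  refine h3.congr' ?_ |>.mono_left (le_refl _)
  filter_upwards [self_mem_nhdsWithin] with ε (hε : (0:ℝ) < ε)
  have hεm : (ε:ℝ) ^ mm N ≠ 0 := pow_ne_zero _ hε.ne'
  simp only [Pi.div_apply]
  rw [div_div_div_comm, div_self hεm, div_one]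

end RTR

namespace RTR
open Equiv Matrix Real

lemma det_scale {N : ℕ} (c : ℝ) (r s : Fin N → ℝ) (E : Fin N → Fin N → ℝ) :
    (Matrix.of fun j k : Fin N => c * (r j * (s k * E j k))).det
      = c ^ N * ((∏ j, r j) * ((∏ k, s k) * (Matrix.of E).det)) := by
  have h1 : (Matrix.of fun j k : Fin N => c * (r j * (s k * E j k)))
      = c • (Matrix.of fun j k : Fin N => r j * (s k * E j k)) := by
    ext j k
    simp [Matrix.smul_apply]
  rw [h1, Matrix.det_smul, Fintype.card_fin]
  have h2 : (Matrix.of fun j k : Fin N => r j * (s k * E j k))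
      = (Matrix.of fun j k : Fin N => r j * (Matrix.of fun j' k' : Fin N => s k' * E j' k') j k) :=
    rfl
  rw [h2, Matrix.det_mul_column]
  have h3 : (Matrix.of fun j k : Fin N => s k * E j k)
      = (Matrix.of fun j k : Fin N => s k * (Matrix.of E) j k) := rfl
  rw [h3, Matrix.det_mul_row]

end RTR

open RTR in
/-- Reciprocal-time relation: the transition density of the noncolliding Brownian
motion with drift `ν` started from `N` particles at the origin equals the
reciprocal-time transform of the driftless noncolliding Brownian motion density
started from `ν`. -/
theorem reciprocal_time_relation (N : ℕ) (hN : 1 ≤ N) (t : ℝ) (ht : 0 < t)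
    (x ν ξ : Fin N → ℝ) (hν : Function.Injective ν)
    (hξ : ∀ j k : Fin N, j < k → ξ j < ξ k) :
    Tendsto
      (fun ε : ℝ =>
        Real.exp (-t * (∑ j : Fin N, ν j ^ 2) / 2) *
          (Matrix.det (Matrix.of fun j k : Fin N => Real.exp (ν j * x k)) /
            Matrix.det (Matrix.of fun j k : Fin N => Real.exp (ν j * (ε * ξ k)))) *
          Matrix.det (Matrix.of fun j k : Fin N => heatKernel t (x j) (ε * ξ k)))
      (𝓝[>] 0)
      (𝓝 ((t : ℝ) ^ (-(N : ℤ)) * (vdm (fun j => x j / t) / vdm ν) *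
        Matrix.det (Matrix.of fun j k : Fin N => heatKernel (1 / t) (x j / t) (ν k)))) := by
  classical
  have ht' : t ≠ 0 := ht.ne'
  set a : Fin N → ℝ := fun j => x j / t with ha
  set c : ℝ := (Real.sqrt (2 * Real.pi * t))⁻¹ with hc
  set c' : ℝ := (Real.sqrt (2 * Real.pi * (1 / t)))⁻¹ with hc'
  set r : Fin N → ℝ := fun j => Real.exp (-(x j) ^ 2 / (2 * t)) with hr
  set q : Fin N → ℝ := fun k => Real.exp (-t * (ν k) ^ 2 / 2) with hq
  set E₀ : ℝ := Real.exp (-t * (∑ j : Fin N, ν j ^ 2) / 2) with hE₀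
  set detA : ℝ := Matrix.det (Matrix.of fun j k : Fin N => Real.exp (ν j * x k)) with hdetA
  -- LHS: heat kernel determinant factorization
  have hsqrtpos : 0 < Real.sqrt (2 * Real.pi * t) := by
    apply Real.sqrt_pos.mpr
    positivity
  have hdetC : ∀ ε : ℝ,
      Matrix.det (Matrix.of fun j k : Fin N => heatKernel t (x j) (ε * ξ k))
        = c ^ N * ((∏ j, r j) * ((∏ k, Real.exp (-(ε * ξ k) ^ 2 / (2 * t))) *
            (Matrix.of fun j k : Fin N => Real.exp (a j * (ε * ξ k))).det)) := by
    intro ε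
    rw [← det_scale c r (fun k => Real.exp (-(ε * ξ k) ^ 2 / (2 * t)))
      (fun j k => Real.exp (a j * (ε * ξ k)))]
    congr 1
    ext j k
    simp only [Matrix.of_apply, heatKernel, div_eq_mul_inv, ← hc]
    rw [hr]
    simp only [← Real.exp_add]
    rw [mul_comm]
    congr 1
    rw [ha]
    field_simp
    ring
  -- RHS: heat kernel determinant factorization
  have hdetH :
      Matrix.det (Matrix.of fun j k : Fin N => heatKernel (1 / t) (x j / t) (ν k))
        = c' ^ N * ((∏ j, r j) * (E₀ * detA)) := by
    have h1 : Matrix.det (Matrix.of fun j k : Fin N => heatKernel (1 / t) (x j / t) (ν k))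
        = c' ^ N * ((∏ j, r j) * ((∏ k, q k) *
            (Matrix.of fun j k : Fin N => Real.exp (x j * ν k)).det)) := by
      rw [← det_scale c' r q (fun j k => Real.exp (x j * ν k))]
      congr 1
      ext j k
      simp only [Matrix.of_apply, heatKernel, div_eq_mul_inv, ← hc']
      rw [hr, hq]
      simp only [← Real.exp_add]
      rw [mul_comm]
      congr 1
      field_simp
      ring
    have h2 : (∏ k, q k) = E₀ := by
      rw [hq, hE₀, ← Real.exp_sum]
      congr 1
      rw [Finset.mul_sum, Finset.sum_div]
    have h3 : (Matrix.of fun j k : Fin N => Real.exp (x j * ν k)).det = detA := by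
      rw [hdetA, ← Matrix.det_transpose]
      congr 1
      ext j k
      simp [mul_comm]
    rw [h1, h2, h3]
  -- limit of the gaussian column correction
  have hs : Tendsto (fun ε : ℝ => ∏ k, Real.exp (-(ε * ξ k) ^ 2 / (2 * t))) (𝓝[>] 0) (𝓝 1) := by
    have hcont : Continuous (fun ε : ℝ => ∏ k, Real.exp (-(ε * ξ k) ^ 2 / (2 * t))) := by
      apply continuous_finset_prod
      intro k _
      apply Real.continuous_exp.comp
      continuity
    have := (hcont.tendsto 0).mono_left (nhdsWithin_le_nhds (s := Set.Ioi (0:ℝ)))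
    simpa using this
  have hratio := ratio_tendsto a ν ξ hν hξ
  -- assemble
  have hfun : ∀ ε : ℝ,
      Real.exp (-t * (∑ j : Fin N, ν j ^ 2) / 2) *
          (Matrix.det (Matrix.of fun j k : Fin N => Real.exp (ν j * x k)) /
            Matrix.det (Matrix.of fun j k : Fin N => Real.exp (ν j * (ε * ξ k)))) *
          Matrix.det (Matrix.of fun j k : Fin N => heatKernel t (x j) (ε * ξ k))
        = (E₀ * detA * c ^ N * (∏ j, r j)) *
            ((∏ k, Real.exp (-(ε * ξ k) ^ 2 / (2 * t))) *
              ((Matrix.of fun j k : Fin N => Real.exp (a j * (ε * ξ k))).det /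
                (Matrix.of fun j k : Fin N => Real.exp (ν j * (ε * ξ k))).det)) := by
    intro ε
    rw [hdetC ε, ← hE₀, ← hdetA]
    ring
  rw [funext hfun]
  have hlim := (hs.mul hratio).const_mul (E₀ * detA * c ^ N * (∏ j, r j))
  convert hlim using 2
  -- final value identity
  rw [hdetH, vdm_eq, vdm_eq]
  have hcc : c = t⁻¹ * c' := by
    rw [hc, hc']
    have : 2 * Real.pi * t = t ^ 2 * (2 * Real.pi * (1 / t)) := by
      field_simp
    rw [this, Real.sqrt_mul (sq_nonneg t), Real.sqrt_sq ht.le, mul_inv]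
  have hzp : (t : ℝ) ^ (-(N : ℤ)) = (t⁻¹) ^ N := by
    rw [zpow_neg, zpow_natCast, inv_pow]
  rw [hcc, hzp, mul_pow]
  ring
end
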